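/- arXiv:2602.06918 — 5 statements merged into one kernel-verified Lean document; each statement's English description precedes it below -/
import Mathlib

section
/- Every 2-copula C satisfies |C(u,v) − C(v,u)| ≤ 1/3 for all (u,v) ∈ [0,1]². -/
open Set

/-- A 2-copula on [0,1]². -/
def IsCopula2 (C : ℝ → ℝ → ℝ) : Prop :=
  (∀ u ∈ Set.Icc (0:ℝ) 1, ∀ v ∈ Set.Icc (0:ℝ) 1, C u v ∈ Set.Icc (0:ℝ) 1) ∧
  (∀ u ∈ Set.Icc (0:ℝ) 1, C u 0 = 0 ∧ C 0 u = 0 ∧ C u 1 = u ∧ C 1 u = u) ∧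
  (∀ u ∈ Set.Icc (0:ℝ) 1, ∀ u' ∈ Set.Icc (0:ℝ) 1, ∀ v ∈ Set.Icc (0:ℝ) 1, ∀ v' ∈ Set.Icc (0:ℝ) 1,
    u ≤ u' → v ≤ v' → 0 ≤ C u' v' - C u' v - C u v' + C u v)

lemma copula_aux (C : ℝ → ℝ → ℝ) (hC : IsCopula2 C)
    (u : ℝ) (hu : u ∈ Set.Icc (0:ℝ) 1) (v : ℝ) (hv : v ∈ Set.Icc (0:ℝ) 1)
    (huv : u ≤ v) : |C u v - C v u| ≤ 1/3 := by
  obtain ⟨hrg, hbd, hinc⟩ := hC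
  have h0 : (0:ℝ) ∈ Set.Icc (0:ℝ) 1 := by norm_num
  have h1 : (1:ℝ) ∈ Set.Icc (0:ℝ) 1 := by norm_num
  obtain ⟨hu0, h0u, hu1, h1u⟩ := hbd u hu
  obtain ⟨hv0, h0v, hv1, h1v⟩ := hbd v hv
  -- C u v ≤ u
  have a1 := hinc 0 h0 u hu v hv 1 h1 hu.1 hv.2
  -- C v u ≤ u
  have a2 := hinc v hv 1 h1 0 h0 u hu hv.2 hu.1
  -- C v u ≥ u + v - 1
  have a3 := hinc v hv 1 h1 u hu 1 h1 hv.2 hu.2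
  -- C u v ≥ u + v - 1
  have a4 := hinc u hu 1 h1 v hv 1 h1 hu.2 hv.2
  -- C v u ≥ C u u
  have a5 := hinc u hu v hv 0 h0 u hu huv hu.1
  -- C u v - C u u ≤ v - u
  have a6 := hinc u hu 1 h1 u hu v hv hu.2 huv
  -- C u v ≥ C u u
  have a7 := hinc 0 h0 u hu u hu v hv hu.1 huv
  -- C v u - C u u ≤ v - u
  have a8 := hinc u hu v hv u hu 1 h1 huv hu.2
  obtain ⟨huu0, h0uu, huu1, h1uu⟩ := hbd u hu
  have n1 := (hrg u hu v hv).1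
  have n2 := (hrg v hv u hu).1
  obtain ⟨ha, hb, hc, hd⟩ := hbd 1 h1
  simp only [ha, hb, hc, hd, hu0, h0u, hu1, h1u, hv0, h0v, hv1, h1v] at a1 a2 a3 a4 a5 a6 a7 a8
  rw [abs_le]
  constructor <;> linarith

/-- Every 2-copula C satisfies |C(u,v) − C(v,u)| ≤ 1/3 on [0,1]². -/
theorem copula_asymmetry_le_third (C : ℝ → ℝ → ℝ) (hC : IsCopula2 C) :
    ∀ u ∈ Icc (0:ℝ) 1, ∀ v ∈ Icc (0:ℝ) 1, |C u v - C v u| ≤ 1/3 := by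
  intro u hu v hv
  rcases le_total u v with h | h
  · exact copula_aux C hC u hu v hv h
  · rw [abs_sub_comm]
    exact copula_aux C hC v hv u hu h
end

section
/- The set of 2-copulas with maximal asymmetry measure S₂' = {C : sup_{(u,v)} |C(u,v)−C(v,u)| = 1/3} has empty interior in the space of 2-copulas with the sup metric; in particular, for any C ∈ S₂' and any n, the copula (1−1/n)C + (1/n)Π is not in S₂', where Π(u,v)=uv. -/
open Set

/-- The asymmetry measure ‖d_C‖_∞ = sup |C(u,v) − C(v,u)| over [0,1]². -/
noncomputable def asym (C : ℝ → ℝ → ℝ) : ℝ :=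
  sSup {x | ∃ u ∈ Set.Icc (0:ℝ) 1, ∃ v ∈ Set.Icc (0:ℝ) 1, x = |C u v - C v u|}

/-- The sup distance d_∞ between two functions on [0,1]². -/
noncomputable def dsup (C C' : ℝ → ℝ → ℝ) : ℝ :=
  sSup {x | ∃ u ∈ Set.Icc (0:ℝ) 1, ∃ v ∈ Set.Icc (0:ℝ) 1, x = |C u v - C' u v|}

lemma mem01 : (0:ℝ) ∈ Set.Icc (0:ℝ) 1 := ⟨le_refl 0, zero_le_one⟩

lemma asym_elem_le {C : ℝ → ℝ → ℝ} (h : IsCopula2 C) {u v : ℝ}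
    (hu : u ∈ Set.Icc (0:ℝ) 1) (hv : v ∈ Set.Icc (0:ℝ) 1) :
    |C u v - C v u| ≤ asym C := by
  apply le_csSup
  · refine ⟨1, ?_⟩
    rintro x ⟨a, ha, b, hb, rfl⟩
    have h1 := h.1 a ha b hb
    have h2 := h.1 b hb a ha
    rw [abs_le]
    constructor <;> [linarith [h1.1, h2.2]; linarith [h1.2, h2.1]]
  · exact ⟨u, hu, v, hv, rfl⟩

lemma mix_copula {C : ℝ → ℝ → ℝ} (h : IsCopula2 C) {t : ℝ} (ht0 : 0 ≤ t) (ht1 : t ≤ 1) :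
    IsCopula2 (fun u v => (1 - t) * C u v + t * (u * v)) := by
  obtain ⟨hr, hb, hinc⟩ := h
  refine ⟨?_, ?_, ?_⟩
  · intro u hu v hv
    have hC := hr u hu v hv
    have huv0 : 0 ≤ u * v := mul_nonneg hu.1 hv.1
    have huv1 : u * v ≤ 1 := mul_le_one₀ hu.2 hv.1 hv.2
    simp only [Set.mem_Icc]
    constructor
    · nlinarith [hC.1]
    · nlinarith [hC.2]
  · intro u hu
    obtain ⟨h1, h2, h3, h4⟩ := hb u hu
    refine ⟨?_, ?_, ?_, ?_⟩ <;> simp [h1, h2, h3, h4] <;> ring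
  · intro u hu u' hu' v hv v' hv' huu hvv
    have h1 := hinc u hu u' hu' v hv v' hv' huu hvv
    have h2 : 0 ≤ (u' - u) * (v' - v) := mul_nonneg (by linarith) (by linarith)
    simp only
    nlinarith

lemma asym_mix_lt {C : ℝ → ℝ → ℝ} (h : IsCopula2 C) (hC : asym C = 1/3) {t : ℝ}
    (ht0 : 0 < t) (ht1 : t ≤ 1) :
    asym (fun u v => (1 - t) * C u v + t * (u * v)) < 1/3 := by
  have hle : asym (fun u v => (1 - t) * C u v + t * (u * v)) ≤ (1 - t) / 3 := by
    apply csSup_le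
    · exact ⟨_, 0, mem01, 0, mem01, rfl⟩
    · rintro x ⟨u, hu, v, hv, rfl⟩
      have hd := asym_elem_le h hu hv
      rw [hC] at hd
      have key : (1 - t) * C u v + t * (u * v) - ((1 - t) * C v u + t * (v * u))
          = (1 - t) * (C u v - C v u) := by ring
      rw [key, abs_mul, abs_of_nonneg (by linarith : (0:ℝ) ≤ 1 - t)]
      nlinarith [abs_nonneg (C u v - C v u)]
  linarith

lemma dsup_mix_le {C : ℝ → ℝ → ℝ} (h : IsCopula2 C) {t : ℝ} (ht0 : 0 ≤ t) :
    dsup C (fun u v => (1 - t) * C u v + t * (u * v)) ≤ t := by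
  apply csSup_le
  · exact ⟨_, 0, mem01, 0, mem01, rfl⟩
  · rintro x ⟨u, hu, v, hv, rfl⟩
    have hC := h.1 u hu v hv
    have huv0 : 0 ≤ u * v := mul_nonneg hu.1 hv.1
    have huv1 : u * v ≤ 1 := mul_le_one₀ hu.2 hv.1 hv.2
    have key : C u v - ((1 - t) * C u v + t * (u * v)) = t * (C u v - u * v) := by ring
    rw [key, abs_mul, abs_of_nonneg ht0]
    have : |C u v - u * v| ≤ 1 := by
      rw [abs_le]; constructor <;> [linarith [hC.1]; linarith [hC.2]]
    nlinarith

/-- The set S₂' of copulas with maximal asymmetry 1/3 has empty interior in the space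
of 2-copulas with the sup metric: every element of S₂' is approximated by copulas
outside S₂'. In particular, for C ∈ S₂' and n ≥ 1, the copula (1−1/n)C + (1/n)Π is
not in S₂', where Π(u,v) = uv. -/
theorem maximalAsymmetry_empty_interior :
    (∀ C : ℝ → ℝ → ℝ, IsCopula2 C → asym C = 1/3 → ∀ ε > (0:ℝ),
      ∃ C' : ℝ → ℝ → ℝ, IsCopula2 C' ∧ dsup C C' < ε ∧ asym C' ≠ 1/3) ∧
    (∀ C : ℝ → ℝ → ℝ, IsCopula2 C → asym C = 1/3 → ∀ n : ℕ, 1 ≤ n →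
      asym (fun u v => (1 - 1/(n:ℝ)) * C u v + (1/(n:ℝ)) * (u * v)) ≠ 1/3) := by
  have key : ∀ C : ℝ → ℝ → ℝ, IsCopula2 C → asym C = 1/3 → ∀ t : ℝ, 0 < t → t ≤ 1 →
      asym (fun u v => (1 - t) * C u v + t * (u * v)) ≠ 1/3 := by
    intro C hC hA t ht0 ht1
    exact ne_of_lt (asym_mix_lt hC hA ht0 ht1)
  constructor
  · intro C hC hA ε hε
    obtain ⟨n, hn⟩ := exists_nat_gt (1 / ε)
    have hn1 : 1 ≤ n := by
      by_contra hc
      push_neg at hc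
      interval_cases n
      simp at hn
      linarith [one_div_pos.2 hε]
    have hnpos : (0:ℝ) < n := by exact_mod_cast Nat.lt_of_lt_of_le Nat.zero_lt_one hn1
    set t : ℝ := 1 / n with htdef
    have ht0 : 0 < t := by positivity
    have ht1 : t ≤ 1 := by
      rw [htdef, div_le_one hnpos]
      exact_mod_cast hn1
    refine ⟨fun u v => (1 - t) * C u v + t * (u * v), mix_copula hC ht0.le ht1, ?_,
      key C hC hA t ht0 ht1⟩
    have hlt : t < ε := by
      rw [htdef, div_lt_iff₀ hnpos]
      rw [div_lt_iff₀ hε] at hn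
      linarith
    exact lt_of_le_of_lt (dsup_mix_le hC ht0.le) hlt
  · intro C hC hA n hn
    have hnpos : (0:ℝ) < n := by exact_mod_cast Nat.lt_of_lt_of_le Nat.zero_lt_one hn
    have ht0 : (0:ℝ) < 1 / n := by positivity
    have ht1 : (1:ℝ) / n ≤ 1 := by
      rw [div_le_one hnpos]; exact_mod_cast hn
    exact key C hC hA (1 / n) ht0 ht1
end

section
/- If a 2-copula C satisfies C(2/3,1/3) = 1/3 and C(1/3,2/3) = 0, then sup_{(u,v)∈[0,1]²}|C(u,v)−C(v,u)| = 1/3, i.e., C has maximal asymmetry. -/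
open Set

lemma copula_diff_le (C : ℝ → ℝ → ℝ) (hC : IsCopula2 C)
    (u : ℝ) (hu : u ∈ Set.Icc (0:ℝ) 1) (v : ℝ) (hv : v ∈ Set.Icc (0:ℝ) 1) :
    C u v - C v u ≤ 1/3 := by
  obtain ⟨hrange, hbound, hinc⟩ := hC
  have h01 : (0:ℝ) ∈ Set.Icc (0:ℝ) 1 := by norm_num
  have h11 : (1:ℝ) ∈ Set.Icc (0:ℝ) 1 := by norm_num
  have hb0 := hbound 0 h01
  have hbu := hbound u hu
  have hbv := hbound v hv
  -- monotone in first argument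
  have hmono1 : ∀ a ∈ Set.Icc (0:ℝ) 1, ∀ b ∈ Set.Icc (0:ℝ) 1, ∀ w ∈ Set.Icc (0:ℝ) 1,
      a ≤ b → C a w ≤ C b w := by
    intro a ha b hb w hw hab
    have h := hinc a ha b hb 0 h01 w hw hab hw.1
    have h1 := (hbound a ha).1
    have h2 := (hbound b hb).1
    linarith
  -- monotone in second argument
  have hmono2 : ∀ w ∈ Set.Icc (0:ℝ) 1, ∀ a ∈ Set.Icc (0:ℝ) 1, ∀ b ∈ Set.Icc (0:ℝ) 1,
      a ≤ b → C w a ≤ C w b := by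
    intro w hw a ha b hb hab
    have h := hinc 0 h01 w hw a ha b hb hw.1 hab
    have h1 := (hbound a ha).2.1
    have h2 := (hbound b hb).2.1
    linarith
  -- Lipschitz in first argument
  have hlip1 : ∀ a ∈ Set.Icc (0:ℝ) 1, ∀ b ∈ Set.Icc (0:ℝ) 1, ∀ w ∈ Set.Icc (0:ℝ) 1,
      a ≤ b → C b w - C a w ≤ b - a := by
    intro a ha b hb w hw hab
    have h := hinc a ha b hb w hw 1 h11 hab hw.2
    have h1 := (hbound a ha).2.2.1
    have h2 := (hbound b hb).2.2.1
    linarith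
  -- Lipschitz in second argument
  have hlip2 : ∀ w ∈ Set.Icc (0:ℝ) 1, ∀ a ∈ Set.Icc (0:ℝ) 1, ∀ b ∈ Set.Icc (0:ℝ) 1,
      a ≤ b → C w b - C w a ≤ b - a := by
    intro w hw a ha b hb hab
    have h := hinc w hw 1 h11 a ha b hb hw.2 hab
    have h1 := (hbound a ha).2.2.2
    have h2 := (hbound b hb).2.2.2
    linarith
  -- Fréchet lower bound for C v u
  have hfre : u + v - 1 ≤ C v u := by
    have h := hinc v hv 1 h11 u hu 1 h11 hv.2 hu.2
    have h1 := (hbound u hu).2.2.2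
    have h2 := (hbound v hv).2.2.1
    have h3 := (hbound 1 h11).2.2.1
    linarith
  -- upper bounds C u v ≤ u, C u v ≤ v
  have hCu : C u v ≤ u := by
    have := hmono2 u hu v hv 1 h11 hv.2
    have h1 := (hbound u hu).2.2.1
    linarith
  have hCv : C u v ≤ v := by
    have := hmono1 u hu 1 h11 v hv hu.2
    have h1 := (hbound v hv).2.2.2
    linarith
  have hCvu0 : 0 ≤ C v u := (hrange v hv u hu).1
  rcases le_total u v with huv | huv
  · -- C u v ≤ C v v, C v v - C v u ≤ v - u
    have h1 : C u v ≤ C v v := hmono1 u hu v hv v hv huv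
    have h2 : C v v - C v u ≤ v - u := hlip2 v hv u hu v hv huv
    -- D ≤ u, D ≤ 1 - v, D ≤ v - u
    linarith
  · -- C u v - C v v ≤ u - v, C v v ≤ C v u
    have h1 : C u v - C v v ≤ u - v := hlip1 v hv u hu v hv huv
    have h2 : C v v ≤ C v u := hmono2 v hv v hv u hu huv
    -- D ≤ v, D ≤ 1 - u, D ≤ u - v
    linarith

/-- If C(2/3,1/3) = 1/3 and C(1/3,2/3) = 0, then C has maximal asymmetry 1/3. -/
theorem maximal_asymmetry_of_values (C : ℝ → ℝ → ℝ) (hC : IsCopula2 C)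
    (h₁ : C (2/3) (1/3) = 1/3) (h₂ : C (1/3) (2/3) = 0) :
    asym C = 1/3 := by
  have hmem : (1/3 : ℝ) ∈ {x | ∃ u ∈ Set.Icc (0:ℝ) 1, ∃ v ∈ Set.Icc (0:ℝ) 1, x = |C u v - C v u|} := by
    refine ⟨2/3, by norm_num, 1/3, by norm_num, ?_⟩
    rw [h₁, h₂]
    norm_num [abs_of_nonneg]
  have hub : ∀ x ∈ {x | ∃ u ∈ Set.Icc (0:ℝ) 1, ∃ v ∈ Set.Icc (0:ℝ) 1, x = |C u v - C v u|},
      x ≤ 1/3 := by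
    rintro x ⟨u, hu, v, hv, rfl⟩
    rw [abs_le]
    constructor
    · have := copula_diff_le C hC v hv u hu
      linarith
    · exact copula_diff_le C hC u hu v hv
  refine le_antisymm (csSup_le ⟨_, hmem⟩ hub) (le_csSup ⟨1/3, hub⟩ hmem)
end

section
/- For θ ∈ [2/3, 3/4], the function C_θ defined by C_θ(u,v) = min(u, v−θ) if (u,v) ∈ [0,1−θ]×[θ,1], C_θ(u,v) = min(u+θ−1, v) if (u,v) ∈ [1−θ,1]×[0,θ], and C_θ(u,v) = max(u+v−1, 0) otherwise, is a 2-copula. -/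
open Set

/-- The copula C_θ: a shuffle of Min with mass on two segments. -/
noncomputable def Ctheta (θ u v : ℝ) : ℝ :=
  if u ∈ Set.Icc (0:ℝ) (1 - θ) ∧ v ∈ Set.Icc θ 1 then min u (v - θ)
  else if u ∈ Set.Icc (1 - θ) 1 ∧ v ∈ Set.Icc (0:ℝ) θ then min (u + θ - 1) v
  else max (u + v - 1) 0

/-- Auxiliary closed form: sum of two min-of-monotone terms. -/
noncomputable def Faux (θ u v : ℝ) : ℝ :=
  min (max 0 (min u (1 - θ))) (max 0 (v - θ)) +
  min (max 0 (min (u + θ - 1) θ)) (max 0 v)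

lemma min_rect {a a' b b' : ℝ} (ha : a ≤ a') (hb : b ≤ b') :
    min a' b + min a b' ≤ min a' b' + min a b := by
  rcases le_total a b with h | h
  · have h1 : min a b = a := min_eq_left h
    have h2 : min a b' = a := min_eq_left (h.trans hb)
    have h3 : min a' b ≤ min a' b' := min_le_min le_rfl hb
    linarith
  · have h1 : min a b = b := min_eq_right h
    have h2 : min a' b = b := min_eq_right (h.trans ha)
    have h3 : min a b' ≤ min a' b' := min_le_min ha le_rfl
    linarith

lemma Ctheta_eq_Faux (θ : ℝ) (hθ1 : 1/2 ≤ θ) (hθ2 : θ ≤ 1)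
    {u v : ℝ} (hu : u ∈ Set.Icc (0:ℝ) 1) (hv : v ∈ Set.Icc (0:ℝ) 1) :
    Ctheta θ u v = Faux θ u v := by
  obtain ⟨hu0, hu1⟩ := hu
  obtain ⟨hv0, hv1⟩ := hv
  unfold Ctheta Faux
  simp only [Set.mem_Icc] at *
  split_ifs with h1 h2
  · -- region 1 : u ∈ [0, 1-θ], v ∈ [θ, 1]
    obtain ⟨⟨_, hu'⟩, hv', _⟩ := h1
    rw [min_eq_left hu', max_eq_right hu0, max_eq_right (by linarith : (0:ℝ) ≤ v - θ),
      min_eq_left (by linarith : u + θ - 1 ≤ θ), max_eq_left (by linarith : u + θ - 1 ≤ 0),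
      min_eq_left (le_max_left _ _)]
    ring
  · -- region 2 : u ∈ [1-θ, 1], v ∈ [0, θ]
    obtain ⟨⟨hu', _⟩, _, hv'⟩ := h2
    rw [max_eq_left (by linarith : v - θ ≤ 0), min_eq_right (le_max_left _ _),
      min_eq_left (by linarith : u + θ - 1 ≤ θ),
      max_eq_right (by linarith : (0:ℝ) ≤ u + θ - 1), max_eq_right hv0]
    ring
  · -- outside both regions
    have H1 : 1 - θ < u ∨ v < θ := by
      by_contra hc
      push_neg at hc
      exact h1 ⟨⟨hu0, hc.1⟩, hc.2, hv1⟩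
    have H2 : u < 1 - θ ∨ θ < v := by
      by_contra hc
      push_neg at hc
      exact h2 ⟨⟨hc.1, hu1⟩, hv0, hc.2⟩
    rcases H1 with hA | hA <;> rcases H2 with hB | hB
    · exact absurd hB (by linarith)
    · -- u > 1-θ, v > θ : W part, positive
      rw [min_eq_right (by linarith : 1 - θ ≤ u), max_eq_right (by linarith : (0:ℝ) ≤ 1 - θ),
        max_eq_right (by linarith : (0:ℝ) ≤ v - θ),
        min_eq_right (by linarith : v - θ ≤ 1 - θ),
        min_eq_left (by linarith : u + θ - 1 ≤ θ),
        max_eq_right (by linarith : (0:ℝ) ≤ u + θ - 1), max_eq_right hv0,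
        min_eq_left (by linarith : u + θ - 1 ≤ v),
        max_eq_left (by linarith : (0:ℝ) ≤ u + v - 1)]
      ring
    · -- u < 1-θ, v < θ : W part, zero
      rw [max_eq_left (by linarith : v - θ ≤ 0), min_eq_right (le_max_left _ _),
        min_eq_left (by linarith : u + θ - 1 ≤ θ), max_eq_left (by linarith : u + θ - 1 ≤ 0),
        min_eq_left (le_max_left _ _), max_eq_right (by linarith : u + v - 1 ≤ 0)]
      ring
    · exact absurd hB (by linarith)

lemma Faux_nonneg (θ u v : ℝ) : 0 ≤ Faux θ u v := by
  unfold Faux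
  have a1 : (0:ℝ) ≤ min (max 0 (min u (1 - θ))) (max 0 (v - θ)) :=
    le_min (le_max_left _ _) (le_max_left _ _)
  have a2 : (0:ℝ) ≤ min (max 0 (min (u + θ - 1) θ)) (max 0 v) :=
    le_min (le_max_left _ _) (le_max_left _ _)
  linarith

/-- For θ ∈ [2/3, 3/4], C_θ is a 2-copula. -/
theorem Ctheta_isCopula2 (θ : ℝ) (hθ : θ ∈ Icc (2/3 : ℝ) (3/4)) :
    IsCopula2 (Ctheta θ) := by
  obtain ⟨hθ1, hθ2⟩ := hθ
  have hθ1' : (1:ℝ)/2 ≤ θ := by linarith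
  have hθ2' : θ ≤ 1 := by linarith
  have h01 : (0:ℝ) ∈ Set.Icc (0:ℝ) 1 := by constructor <;> norm_num
  have h11 : (1:ℝ) ∈ Set.Icc (0:ℝ) 1 := by constructor <;> norm_num
  refine ⟨?_, ?_, ?_⟩
  · intro u hu v hv
    rw [Ctheta_eq_Faux θ hθ1' hθ2' hu hv]
    obtain ⟨hu0, hu1⟩ := hu
    obtain ⟨hv0, hv1⟩ := hv
    refine ⟨Faux_nonneg θ u v, ?_⟩
    unfold Faux
    have a1 : min (max 0 (min u (1 - θ))) (max 0 (v - θ)) ≤ 1 - θ :=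
      (min_le_left _ _).trans (max_le (by linarith) (min_le_right _ _))
    have a2 : min (max 0 (min (u + θ - 1) θ)) (max 0 v) ≤ θ :=
      (min_le_left _ _).trans (max_le (by linarith) (min_le_right _ _))
    linarith
  · intro u hu
    obtain ⟨hu0, hu1⟩ := hu
    refine ⟨?_, ?_, ?_, ?_⟩
    · rw [Ctheta_eq_Faux θ hθ1' hθ2' ⟨hu0, hu1⟩ h01]
      unfold Faux
      rw [max_eq_left (by linarith : (0:ℝ) - θ ≤ 0), min_eq_right (le_max_left _ _),
        max_self, min_eq_right (le_max_left _ _)]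
      ring
    · rw [Ctheta_eq_Faux θ hθ1' hθ2' h01 ⟨hu0, hu1⟩]
      unfold Faux
      rw [min_eq_left (by linarith : (0:ℝ) ≤ 1 - θ), max_self,
        min_eq_left (le_max_left _ _),
        min_eq_left (by linarith : (0:ℝ) + θ - 1 ≤ θ),
        max_eq_left (by linarith : (0:ℝ) + θ - 1 ≤ 0),
        min_eq_left (le_max_left _ _)]
      ring
    · rw [Ctheta_eq_Faux θ hθ1' hθ2' ⟨hu0, hu1⟩ h11]
      unfold Faux
      rcases le_total u (1 - θ) with h | h
      · rw [min_eq_left h, max_eq_right hu0,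
          max_eq_right (by linarith : (0:ℝ) ≤ 1 - θ), min_eq_left (by linarith : u ≤ 1 - θ),
          min_eq_left (by linarith : u + θ - 1 ≤ θ),
          max_eq_left (by linarith : u + θ - 1 ≤ 0),
          min_eq_left (le_max_left _ _)]
        ring
      · rw [min_eq_right h, max_eq_right (by linarith : (0:ℝ) ≤ 1 - θ), min_self,
          min_eq_left (by linarith : u + θ - 1 ≤ θ),
          max_eq_right (by linarith : (0:ℝ) ≤ u + θ - 1),
          max_eq_right (by norm_num : (0:ℝ) ≤ 1),
          min_eq_left (by linarith : u + θ - 1 ≤ 1)]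
        ring
    · rw [Ctheta_eq_Faux θ hθ1' hθ2' h11 ⟨hu0, hu1⟩]
      unfold Faux
      rw [min_eq_right (by linarith : 1 - θ ≤ 1),
        max_eq_right (by linarith : (0:ℝ) ≤ 1 - θ),
        show (1:ℝ) + θ - 1 = θ by ring, min_self,
        max_eq_right (by linarith : (0:ℝ) ≤ θ), max_eq_right hu0]
      rcases le_total u θ with h | h
      · rw [max_eq_left (by linarith : u - θ ≤ 0), min_eq_right (by linarith : (0:ℝ) ≤ 1 - θ),
          min_eq_right h]
        ring
      · rw [max_eq_right (by linarith : (0:ℝ) ≤ u - θ),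
          min_eq_right (by linarith : u - θ ≤ 1 - θ), min_eq_left h]
        ring
  · intro u hu u' hu' v hv v' hv' huu hvv
    rw [Ctheta_eq_Faux θ hθ1' hθ2' hu hv, Ctheta_eq_Faux θ hθ1' hθ2' hu' hv,
      Ctheta_eq_Faux θ hθ1' hθ2' hu hv', Ctheta_eq_Faux θ hθ1' hθ2' hu' hv']
    unfold Faux
    have ma1 : max 0 (min u (1 - θ)) ≤ max 0 (min u' (1 - θ)) :=
      max_le_max le_rfl (min_le_min huu le_rfl)
    have mb1 : max 0 (v - θ) ≤ max 0 (v' - θ) :=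
      max_le_max le_rfl (by linarith)
    have ma2 : max 0 (min (u + θ - 1) θ) ≤ max 0 (min (u' + θ - 1) θ) :=
      max_le_max le_rfl (min_le_min (by linarith) le_rfl)
    have mb2 : max 0 v ≤ max 0 v' := max_le_max le_rfl hvv
    have k1 := min_rect ma1 mb1
    have k2 := min_rect ma2 mb2
    linarith
end

section
/- For c ∈ [0,1], the function C_{(c)}(u,v) = min(u, v, max((u+v−c)/(2−c), 0)) is a 2-copula. -/
open Set

/-- The one-parameter family C_{(c)}(u,v) = min(u, v, max((u+v−c)/(2−c), 0)). -/
noncomputable def Cc (c u v : ℝ) : ℝ := min u (min v (max ((u + v - c)/(2 - c)) 0))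

/-- Supermodularity of the min of two supermodular functions whose difference is
increasing in the first coordinate and decreasing in the second, stated on four points. -/
lemma key_min (a b a' b' p q p' q' : ℝ)
    (h1 : a' + b ≤ b' + a) (h2 : p' + q ≤ q' + p)
    (h3 : a - p ≤ a' - p') (h4 : b - q ≤ b' - q')
    (h5 : b - q ≤ a - p) (h6 : b' - q' ≤ a' - p') :
    min a' p' + min b q ≤ min b' q' + min a p := by
  rcases min_cases a' p' with ⟨e1, l1⟩ | ⟨e1, l1⟩ <;>
  rcases min_cases b q with ⟨e2, l2⟩ | ⟨e2, l2⟩ <;>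
  rcases min_cases b' q' with ⟨e3, l3⟩ | ⟨e3, l3⟩ <;>
  rcases min_cases a p with ⟨e4, l4⟩ | ⟨e4, l4⟩ <;>
  rw [e1, e2, e3, e4] <;> linarith

/-- Convexity inequality for `max · 0`. -/
lemma max_conv (A1 A2 B1 B2 : ℝ) (hsum : A1 + A2 = B1 + B2)
    (h1 : B1 ≤ A1) (h2 : A1 ≤ B2) :
    max A1 0 + max A2 0 ≤ max B2 0 + max B1 0 := by
  rcases max_cases A1 0 with ⟨e1, l1⟩ | ⟨e1, l1⟩ <;>
  rcases max_cases A2 0 with ⟨e2, l2⟩ | ⟨e2, l2⟩ <;>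
  rcases max_cases B1 0 with ⟨e3, l3⟩ | ⟨e3, l3⟩ <;>
  rcases max_cases B2 0 with ⟨e4, l4⟩ | ⟨e4, l4⟩ <;>
  rw [e1, e2, e3, e4] <;> linarith

/-- Slope lemma: `u - max A 0` is increasing along directions where `A` grows by at most
the growth of `u`. -/
lemma slope_max (u u' A A' : ℝ) (h1 : A ≤ A') (h2 : A' - A ≤ u' - u) :
    u - max A 0 ≤ u' - max A' 0 := by
  rcases max_cases A 0 with ⟨e1, l1⟩ | ⟨e1, l1⟩ <;>
  rcases max_cases A' 0 with ⟨e2, l2⟩ | ⟨e2, l2⟩ <;>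
  rw [e1, e2] <;> linarith

lemma max_diff_le (A A' : ℝ) (h : A ≤ A') : max A' 0 - max A 0 ≤ A' - A := by
  rcases max_cases A 0 with ⟨e1, l1⟩ | ⟨e1, l1⟩ <;>
  rcases max_cases A' 0 with ⟨e2, l2⟩ | ⟨e2, l2⟩ <;>
  rw [e1, e2] <;> linarith

lemma min_lip (x M M' d : ℝ) (h : M' - M ≤ d) (hd : 0 ≤ d) :
    min x M' - min x M ≤ d := by
  rcases min_cases x M with ⟨e1, l1⟩ | ⟨e1, l1⟩ <;>
  rcases min_cases x M' with ⟨e2, l2⟩ | ⟨e2, l2⟩ <;>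
  rw [e1, e2] <;> linarith

lemma min_rearrange (x y M : ℝ) : min (min x M) y = min x (min y M) := by
  rw [min_assoc, min_comm M y]

/-- For c ∈ [0,1], the function C_{(c)} is a 2-copula. -/
theorem Cc_isCopula2 (c : ℝ) (hc : c ∈ Icc (0:ℝ) 1) : IsCopula2 (Cc c) := by
  obtain ⟨hc0, hc1⟩ := hc
  have hk0 : (0:ℝ) < 2 - c := by linarith
  have hk1 : (1:ℝ) ≤ 2 - c := by linarith
  refine ⟨?_, ?_, ?_⟩
  · -- range
    intro u hu v hv
    constructor
    · exact le_min hu.1 (le_min hv.1 (le_max_right _ _))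
    · exact le_trans (min_le_left _ _) hu.2
  · -- boundary conditions
    intro u hu
    refine ⟨?_, ?_, ?_, ?_⟩
    · show min u (min 0 (max ((u + 0 - c)/(2 - c)) 0)) = 0
      rw [min_eq_left (le_max_right _ _), min_eq_right hu.1]
    · show min 0 (min u (max ((0 + u - c)/(2 - c)) 0)) = 0
      rw [min_eq_left (le_min hu.1 (le_max_right _ _))]
    · show min u (min 1 (max ((u + 1 - c)/(2 - c)) 0)) = u
      have h : u ≤ (u + 1 - c)/(2 - c) := by
        rw [le_div_iff₀ hk0]; nlinarith [hu.1, hu.2]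
      exact min_eq_left (le_min hu.2 (h.trans (le_max_left _ _)))
    · show min 1 (min u (max ((1 + u - c)/(2 - c)) 0)) = u
      have h : u ≤ (1 + u - c)/(2 - c) := by
        rw [le_div_iff₀ hk0]; nlinarith [hu.1, hu.2]
      have h2 : min u (max ((1 + u - c)/(2 - c)) 0) = u :=
        min_eq_left (h.trans (le_max_left _ _))
      rw [h2, min_eq_right hu.2]
  · -- 2-increasing
    intro u hu u' hu' v hv v' hv' huu hvv
    set A00 : ℝ := (u + v - c)/(2 - c) with hA00def
    set A01 : ℝ := (u + v' - c)/(2 - c) with hA01def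
    set A10 : ℝ := (u' + v - c)/(2 - c) with hA10def
    set A11 : ℝ := (u' + v' - c)/(2 - c) with hA11def
    have hdu : A10 - A00 = (u' - u)/(2 - c) := by
      rw [hA10def, hA00def, div_sub_div_same]; ring_nf
    have hdu' : A11 - A01 = (u' - u)/(2 - c) := by
      rw [hA11def, hA01def, div_sub_div_same]; ring_nf
    have hdv : A01 - A00 = (v' - v)/(2 - c) := by
      rw [hA01def, hA00def, div_sub_div_same]; ring_nf
    have hdv' : A11 - A10 = (v' - v)/(2 - c) := by
      rw [hA11def, hA10def, div_sub_div_same]; ring_nf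
    have hduu : (u' - u)/(2 - c) ≤ u' - u := div_le_self (by linarith) hk1
    have hduu0 : 0 ≤ (u' - u)/(2 - c) := div_nonneg (by linarith) hk0.le
    have hdvv : (v' - v)/(2 - c) ≤ v' - v := div_le_self (by linarith) hk1
    have hdvv0 : 0 ≤ (v' - v)/(2 - c) := div_nonneg (by linarith) hk0.le
    -- Step 1: g(u,v) = min u (max A 0) is supermodular on these points
    have step1 : min u' (max A10 0) + min u (max A01 0) ≤
        min u' (max A11 0) + min u (max A00 0) := by
      apply key_min
      · linarith
      · exact max_conv A10 A01 A00 A11 (by linarith) (by linarith) (by linarith)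
      · exact slope_max u u' A00 A10 (by linarith) (by linarith)
      · exact slope_max u u' A01 A11 (by linarith) (by linarith)
      · have := max_le_max (le_of_eq rfl : A00 ≤ A00) (le_refl (0:ℝ))
        have h := max_le_max (show A00 ≤ A01 by linarith) (le_refl (0:ℝ))
        linarith
      · have h := max_le_max (show A10 ≤ A11 by linarith) (le_refl (0:ℝ))
        linarith
    -- Step 2: min of step-1 function with v is supermodular
    have step2 : min (min u' (max A10 0)) v + min (min u (max A01 0)) v' ≤
        min (min u' (max A11 0)) v' + min (min u (max A00 0)) v := by
      apply key_min
      · exact step1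
      · linarith
      · have h : min u (max A00 0) ≤ min u' (max A10 0) :=
          min_le_min huu (max_le_max (by linarith) (le_refl (0:ℝ)))
        linarith
      · have h : min u (max A01 0) ≤ min u' (max A11 0) :=
          min_le_min huu (max_le_max (by linarith) (le_refl (0:ℝ)))
        linarith
      · have h := min_lip u (max A00 0) (max A01 0) (v' - v)
          (le_trans (max_diff_le A00 A01 (by linarith)) (by linarith)) (by linarith)
        linarith
      · have h := min_lip u' (max A10 0) (max A11 0) (v' - v)
          (le_trans (max_diff_le A10 A11 (by linarith)) (by linarith)) (by linarith)
        linarith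
    have e1 := min_rearrange u' v (max A10 0)
    have e2 := min_rearrange u v' (max A01 0)
    have e3 := min_rearrange u' v' (max A11 0)
    have e4 := min_rearrange u v (max A00 0)
    show 0 ≤ min u' (min v' (max A11 0)) - min u' (min v (max A10 0))
        - min u (min v' (max A01 0)) + min u (min v (max A00 0))
    linarith [step2, e1, e2, e3, e4]
end
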